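/- For every integer n ≥ 1, every guess g ∈ G and every candidate set C ⊆ S, V_n(g,C) ≤ V_{n+2}(g,C) ≤ V*(g,C). -/

import Mathlib

/-!
Formalization of guessing games (Wordle-style), following the paper's definitions:
guesses `G`, secrets `S ⊆ G`, responses `R` with `|R| > 1`, affirmative response
`r* ∈ R`, and an answering function `a` with `a(g,s) = r* ↔ g = s`.
-/

structure GuessingGame (α ρ : Type*) [DecidableEq α] [DecidableEq ρ] where
  G : Finset α
  S : Finset α
  R : Finset ρ
  rstar : ρ
  ans : α → α → ρ
  S_subset_G : S ⊆ G
  one_lt_card_R : 1 < R.card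
  rstar_mem : rstar ∈ R
  ans_mem : ∀ g ∈ G, ∀ s ∈ S, ans g s ∈ R
  ans_eq_rstar_iff : ∀ g ∈ G, ∀ s ∈ S, (ans g s = rstar ↔ g = s)

namespace GuessingGame

variable {α ρ : Type*} [DecidableEq α] [DecidableEq ρ] (gm : GuessingGame α ρ)

/-- The split `C_{g,r} = {c ∈ C : a(g,c) = r}`. -/
def split (C : Finset α) (g : α) (r : ρ) : Finset α :=
  C.filter fun c => gm.ans g c = r

/-- `nSplits(g,C) = |{r ∈ R : C_{g,r} ≠ ∅}|`. -/
def nSplits (g : α) (C : Finset α) : ℕ :=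
  (gm.R.filter fun r => (gm.split C g r).Nonempty).card

/-- The useful guesses `UG(C)`: for `|C| > 1` the guesses `g ∈ G` with
`nSplits(g,C) ≠ 1`; for `|C| ≤ 1`, `UG(C) = C`. -/
def UG (C : Finset α) : Finset α :=
  if 1 < C.card then gm.G.filter fun g => gm.nSplits g C ≠ 1 else C

/-- `MaxSplits(C) = max_{g ∈ G} nSplits(g,C)`. -/
def MaxSplits (C : Finset α) : ℕ :=
  gm.G.sup fun g => gm.nSplits g C

end GuessingGame

/-- `Bound(n,b)`: `Bound(0,b) = 0`, `Bound(n,1) = n(n+1)/2`, and for `n > 0`, `b > 1`,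
`Bound(n,b) = Σ_{i=1}^{k} i·b^{i-1} + (k+1)·(n - (b^k - 1)/(b-1))` where
`k = ⌊log_b (n(b-1)+1)⌋`. -/
def Bound (n b : ℕ) : ℕ :=
  if n = 0 then 0
  else if b = 1 then n * (n + 1) / 2
  else
    (∑ i ∈ Finset.range (Nat.log b (n * (b - 1) + 1)), (i + 1) * b ^ i) +
      (Nat.log b (n * (b - 1) + 1) + 1) *
        (n - (b ^ Nat.log b (n * (b - 1) + 1) - 1) / (b - 1))

namespace GuessingGame

variable {α ρ : Type*} [DecidableEq α] [DecidableEq ρ] (gm : GuessingGame α ρ)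

/-- Fuel-based implementation of the well-founded recursion defining `MinTotal`:
`MinTotal(∅) = 0` and for nonempty `C`,
`MinTotal(C) = min_{g ∈ UG(C)} (|C| + Σ_{r ∈ R \ {r*}} MinTotal(C_{g,r}))`.
Fuel `|C|` suffices since for a useful guess every split is a proper subset of `C`. -/
noncomputable def MinTotalAux : ℕ → Finset α → ℕ
  | 0, _ => 0
  | n + 1, C =>
    if C = ∅ then 0
    else
      sInf (↑((gm.UG C).image fun g =>
        C.card + ∑ r ∈ gm.R.erase gm.rstar, MinTotalAux n (gm.split C g r)) : Set ℕ)

/-- `MinTotal(C)`. -/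
noncomputable def MinTotal (C : Finset α) : ℕ :=
  gm.MinTotalAux C.card C

/-- `V*(g,C) = |C| + Σ_{r ∈ R \ {r*}} MinTotal(C_{g,r})`. -/
noncomputable def Vstar (g : α) (C : Finset α) : ℕ :=
  C.card + ∑ r ∈ gm.R.erase gm.rstar, gm.MinTotal (gm.split C g r)

/-- The lower bounds `LB_i` (`i ≥ 1`; `LB 0` is junk):
`LB_1(C) = Bound(|C|, MaxSplits(S))`, `LB_2(C) = Bound(|C|, MaxSplits(C))`, and for
`i ≥ 1`, `LB_{i+2}(∅) = 0` and `LB_{i+2}(C) = min_{g ∈ UG(C)} V_i(g,C)` for nonempty `C`,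
where `V_i(g,C) = |C| + Σ_{r ∈ R \ {r*}} LB_i(C_{g,r})`. -/
noncomputable def LB : ℕ → Finset α → ℕ
  | 0, _ => 0
  | 1, C => Bound C.card (gm.MaxSplits gm.S)
  | 2, C => Bound C.card (gm.MaxSplits C)
  | n + 3, C =>
    if C = ∅ then 0
    else
      sInf (↑((gm.UG C).image fun g =>
        C.card + ∑ r ∈ gm.R.erase gm.rstar, LB (n + 1) (gm.split C g r)) : Set ℕ)

/-- `V_i(g,C) = |C| + Σ_{r ∈ R \ {r*}} LB_i(C_{g,r})`. -/
noncomputable def V (i : ℕ) (g : α) (C : Finset α) : ℕ :=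
  C.card + ∑ r ∈ gm.R.erase gm.rstar, gm.LB i (gm.split C g r)

end GuessingGame

/-! ### Auxiliary arithmetic: the function `Bound` as a sum of "depths". -/

namespace GGaux
open Finset

def cap (b t : ℕ) : ℕ := ∑ i ∈ Finset.range t, b ^ i

lemma cap_succ (b t : ℕ) : cap b (t+1) = cap b t + b ^ t := Finset.sum_range_succ _ _

lemma cap_succ' (b t : ℕ) : cap b (t+1) = 1 + b * cap b t := by
  rw [cap, Finset.sum_range_succ' (fun i => b ^ i) t, pow_zero]
  simp only [pow_succ]
  rw [← Finset.sum_mul, ← cap]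
  ring

lemma cap_mono_left {b b' : ℕ} (h : b' ≤ b) (t : ℕ) : cap b' t ≤ cap b t :=
  Finset.sum_le_sum fun i _ => Nat.pow_le_pow_left h i

lemma pred_mul_cap {b : ℕ} (hb : 2 ≤ b) (t : ℕ) : (b - 1) * cap b t + 1 = b ^ t := by
  obtain ⟨b', rfl⟩ : ∃ b', b = b' + 1 := ⟨b - 1, by omega⟩
  simp only [Nat.add_sub_cancel]
  induction t with
  | zero => simp [cap]
  | succ t ih => rw [cap_succ', pow_succ, ← ih]; ring

lemma cap_div {b : ℕ} (hb : 2 ≤ b) (t : ℕ) : (b ^ t - 1) / (b - 1) = cap b t := by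
  have h := pred_mul_cap hb t
  have h2 : b ^ t - 1 = (b - 1) * cap b t := by omega
  rw [h2, Nat.mul_div_cancel_left _ (by omega)]

def dep (b j : ℕ) : ℕ := if b = 1 then j + 1 else Nat.log b (j * (b-1) + 1) + 1

lemma one_le_dep (b j : ℕ) : 1 ≤ dep b j := by unfold dep; split <;> omega

lemma dep_le_iff {b : ℕ} (hb : 1 ≤ b) {j t : ℕ} : dep b j ≤ t ↔ j < cap b t := by
  rcases eq_or_lt_of_le hb with h1 | h2
  · subst h1
    simp [dep, cap]
  · rw [dep, if_neg (by omega), Nat.succ_le_iff,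
      Nat.log_lt_iff_lt_pow h2 (by omega), ← pred_mul_cap h2]
    constructor <;> intro h
    · have h3 : (b-1) * j < (b-1) * cap b t := by rw [mul_comm (b-1) j]; omega
      exact Nat.lt_of_mul_lt_mul_left h3
    · have h3 : (b-1) * j < (b-1) * cap b t :=
        mul_lt_mul_of_pos_left h (by omega : 0 < b - 1)
      rw [mul_comm (b-1) j] at h3
      omega

lemma lt_cap_dep {b : ℕ} (hb : 1 ≤ b) (j : ℕ) : j < cap b (dep b j) := (dep_le_iff hb).1 le_rfl

lemma dep_mono {b : ℕ} (hb : 1 ≤ b) : Monotone (dep b) := fun i j hij => by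
  rw [dep_le_iff hb]; exact lt_of_le_of_lt hij (lt_cap_dep hb j)

lemma dep_anti {b b' : ℕ} (hb' : 1 ≤ b') (hbb : b' ≤ b) (j : ℕ) : dep b j ≤ dep b' j := by
  rw [dep_le_iff (le_trans hb' hbb)]
  exact lt_of_lt_of_le (lt_cap_dep hb' j) (cap_mono_left hbb _)

lemma dep_zero {b : ℕ} : dep b 0 = 1 := by
  unfold dep; split
  · rfl
  · simp

lemma dep_shift {b : ℕ} (hb : 2 ≤ b) {i p : ℕ} (hp : p < b) :
    dep b (1 + i * b + p) ≤ dep b i + 1 := by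
  have hb1 : 1 ≤ b := by omega
  rw [dep_le_iff hb1, cap_succ']
  have hc := lt_cap_dep hb1 i
  have h1 : i * b + p < b * cap b (dep b i) := by
    calc i * b + p < (i+1) * b := by rw [add_mul]; omega
    _ ≤ cap b (dep b i) * b := Nat.mul_le_mul_right _ hc
    _ = b * cap b (dep b i) := mul_comm _ _
  omega

def D (b n : ℕ) : ℕ := ∑ j ∈ Finset.range n, dep b j

lemma D_mono {b : ℕ} : Monotone (D b) := fun n m h =>
  Finset.sum_le_sum_of_subset (Finset.range_subset_range.2 h)

lemma D_anti {b b' : ℕ} (hb' : 1 ≤ b') (h : b' ≤ b) (n : ℕ) : D b n ≤ D b' n :=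
  Finset.sum_le_sum fun j _ => dep_anti hb' h j

lemma D_one {b : ℕ} : D b 1 = 1 := by simp [D, dep_zero]

lemma Bound_zero (b : ℕ) : Bound 0 b = 0 := by simp [Bound]

lemma Bound_one {b : ℕ} (hb : 2 ≤ b) : Bound 1 b = 1 := by
  have h1 : 1 * (b-1) + 1 = b ^ 1 := by rw [pow_one]; omega
  rw [Bound, if_neg one_ne_zero, if_neg (by omega), h1, Nat.log_pow (by omega), pow_one,
    Nat.div_self (by omega : 0 < b - 1), Finset.sum_range_one]
  norm_num

lemma Bound_eq_D {b : ℕ} (hb : 1 ≤ b) (n : ℕ) : Bound n b = D b n := by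
  induction n with
  | zero => simp [Bound, D]
  | succ n ih =>
    rw [D, Finset.sum_range_succ, ← D, ← ih]
    rcases eq_or_lt_of_le hb with h1 | h2
    · -- b = 1
      subst h1
      rw [dep, if_pos rfl]
      rcases Nat.eq_zero_or_pos n with rfl | hn
      · simp [Bound]
      · rw [Bound, if_neg (by omega), if_pos rfl, Bound, if_neg (by omega), if_pos rfl]
        have heq : (n+1) * (n+1+1) = n * (n+1) + 2 * (n+1) := by ring
        rw [heq, Nat.add_mul_div_left _ _ (by norm_num)]
    · -- 2 ≤ b
      have hb2 : 2 ≤ b := h2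
      have hdep : dep b n = Nat.log b (n * (b-1) + 1) + 1 := by
        rw [dep, if_neg (by omega)]
      rcases Nat.eq_zero_or_pos n with rfl | hn
      · rw [show (0:ℕ)+1 = 1 from rfl, Bound_one hb2]
        have hbne : ¬ (b = 1) := by omega
        simp [D, dep, hbne, Nat.log_one_right, Bound_zero]
      · -- n ≥ 1
        set k := Nat.log b (n * (b-1) + 1) with hk
        have hkl : b ^ k ≤ n * (b-1) + 1 := Nat.pow_log_le_self b (by omega)
        have hkh : n * (b-1) + 1 < b ^ (k+1) := Nat.lt_pow_succ_log_self h2 _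
        have hpk := pred_mul_cap hb2 k
        have hpk1 := pred_mul_cap hb2 (k+1)
        have hck : cap b k ≤ n := by
          have h3 : (b-1) * cap b k ≤ (b-1) * n := by rw [mul_comm (b-1) n]; omega
          exact Nat.le_of_mul_le_mul_left h3 (by omega)
        have hck1 : n < cap b (k+1) := by
          have h3 : (b-1) * n < (b-1) * cap b (k+1) := by rw [mul_comm (b-1) n]; omega
          exact Nat.lt_of_mul_lt_mul_left h3
        rcases Nat.lt_or_ge (n+1) (cap b (k+1)) with hlt | hge
        · -- n + 1 < cap b (k+1) : log stays k
          have hk' : Nat.log b ((n+1) * (b-1) + 1) = k := by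
            apply Nat.log_eq_of_pow_le_of_lt_pow
            · refine le_trans hkl ?_
              have := Nat.mul_le_mul_right (b-1) (by omega : n ≤ n + 1)
              omega
            · rw [← hpk1]
              have h3 : (b-1) * (n+1) < (b-1) * cap b (k+1) :=
                mul_lt_mul_of_pos_left hlt (by omega : 0 < b - 1)
              rw [mul_comm (b-1) (n+1)] at h3
              omega
          rw [Bound, if_neg (by omega), if_neg (by omega), hk', cap_div hb2,
            Bound, if_neg (by omega), if_neg (by omega), ← hk, cap_div hb2, hdep]
          have h4 : n + 1 - cap b k = (n - cap b k) + 1 := by omega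
          rw [h4]
          ring
        · -- n + 1 = cap b (k+1) : log becomes k + 1
          have heq : n + 1 = cap b (k+1) := by omega
          have hbk : (n+1) * (b-1) + 1 = b ^ (k+1) := by
            rw [mul_comm (n+1) (b-1), heq]
            exact hpk1
          have hk' : Nat.log b ((n+1) * (b-1) + 1) = k + 1 := by rw [hbk, Nat.log_pow h2]
          rw [Bound, if_neg (by omega), if_neg (by omega), hk', cap_div hb2,
            Bound, if_neg (by omega), if_neg (by omega), ← hk, cap_div hb2, hdep]
          have h4 : n + 1 - cap b (k+1) = 0 := by omega
          have h5 : n - cap b k + 1 = b ^ k := by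
            have := cap_succ b k
            omega
          rw [h4, Finset.sum_range_succ, Nat.mul_zero, Nat.add_zero]
          have h6 : (k+1) * (n - cap b k) + (k+1) = (k+1) * b ^ k := by
            rw [← h5]; ring
          omega

lemma Bound_anti {b b' : ℕ} (hb' : 1 ≤ b') (h : b' ≤ b) (n : ℕ) : Bound n b ≤ Bound n b' := by
  rw [Bound_eq_D (le_trans hb' h), Bound_eq_D hb']
  exact D_anti hb' h n

lemma sum_range_le_sum {f : ℕ → ℕ} (hf : Monotone f) :
    ∀ (n : ℕ) (T : Finset ℕ), n ≤ T.card → ∑ j ∈ range n, f j ≤ ∑ j ∈ T, f j := by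
  intro n
  induction n with
  | zero => simp
  | succ n ih =>
    intro T hT
    have hTne : T.Nonempty := card_pos.1 (by omega)
    have hsub : T ⊆ Finset.range (T.max' hTne + 1) := fun x hx =>
      mem_range.2 (Nat.lt_succ_of_le (le_max' T x hx))
    have hmax : n ≤ T.max' hTne := by
      have := card_le_card hsub
      simp only [card_range] at this
      omega
    calc ∑ j ∈ range (n+1), f j = ∑ j ∈ range n, f j + f n := Finset.sum_range_succ _ _
      _ ≤ ∑ j ∈ T.erase (T.max' hTne), f j + f (T.max' hTne) := by
          refine add_le_add (ih _ ?_) (hf hmax)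
          rw [card_erase_of_mem (max'_mem T hTne)]
          omega
      _ = ∑ j ∈ T, f j := Finset.sum_erase_add T f (max'_mem T hTne)

/-- The key combinatorial lemma: splitting optimally is at least as good as `Bound`
predicts. -/
lemma key_lemma {b : ℕ} (hb : 2 ≤ b) {ι : Type*} [DecidableEq ι] (F : Finset ι) (m : ι → ℕ)
    (hparts : (F.filter fun r => 0 < m r).card ≤ b)
    (N : ℕ) (hlow : N ≤ (∑ r ∈ F, m r) + 1) (hhigh : ∑ r ∈ F, m r ≤ N) :
    D b N ≤ N + ∑ r ∈ F, D b (m r) := by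
  have hb1 : 1 ≤ b := by omega
  set F' := F.filter fun r => 0 < m r with hF'
  have hsum_eq : ∑ r ∈ F', m r = ∑ r ∈ F, m r := by
    rw [hF', Finset.sum_filter]
    apply Finset.sum_congr rfl
    intro r _
    split <;> omega
  have hD_le : ∑ r ∈ F', D b (m r) ≤ ∑ r ∈ F, D b (m r) :=
    Finset.sum_le_sum_of_subset (Finset.filter_subset _ _)
  have hcard : F'.card ≤ b := hparts
  set e := F'.equivFin with he
  set f : ι → ℕ := fun r => if h : r ∈ F' then (e ⟨r, h⟩ : ℕ) else 0 with hf
  have hfb : ∀ r ∈ F', f r < b := by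
    intro r hr
    rw [hf]
    simp only [dif_pos hr]
    exact lt_of_lt_of_le (e ⟨r, hr⟩).isLt hcard
  have hfinj : ∀ r ∈ F', ∀ r' ∈ F', f r = f r' → r = r' := by
    intro r hr r' hr' hrr
    rw [hf] at hrr
    simp only [dif_pos hr, dif_pos hr'] at hrr
    have := e.injective (Fin.ext hrr)
    exact Subtype.mk_eq_mk.1 this
  set A := F'.sigma (fun r => Finset.range (m r)) with hA
  set ψ : (Σ _ : ι, ℕ) → ℕ := fun x => 1 + (f x.1 + b * x.2) with hψ
  have hψinj : ∀ x ∈ A, ∀ y ∈ A, ψ x = ψ y → x = y := by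
    intro x hx y hy hxy
    rw [hA, Finset.mem_sigma] at hx hy
    rw [hψ] at hxy
    simp only [add_right_inj] at hxy
    have hx1 : f x.1 < b := hfb _ hx.1
    have hy1 : f y.1 < b := hfb _ hy.1
    have hd : x.2 = y.2 := by
      have h1 : (f x.1 + b * x.2) / b = x.2 := by
        rw [Nat.add_mul_div_left _ _ (by omega), Nat.div_eq_of_lt hx1, Nat.zero_add]
      have h2 : (f y.1 + b * y.2) / b = y.2 := by
        rw [Nat.add_mul_div_left _ _ (by omega), Nat.div_eq_of_lt hy1, Nat.zero_add]
      rw [← h1, ← h2, hxy]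
    rw [hd] at hxy
    have hm : f x.1 = f y.1 := by omega
    have := hfinj _ hx.1 _ hy.1 hm
    exact Sigma.ext this (heq_of_eq hd)
  set T := A.image ψ with hT
  have hTcard : T.card = ∑ r ∈ F', m r := by
    rw [hT, Finset.card_image_of_injOn (fun x hx y hy => hψinj x hx y hy),
      hA, Finset.card_sigma]
    simp
  have hTsum : ∑ j ∈ T, dep b j ≤ (∑ r ∈ F', D b (m r)) + ∑ r ∈ F', m r := by
    rw [hT, Finset.sum_image hψinj, hA, Finset.sum_sigma]
    have hterm : ∀ r ∈ F', ∑ i ∈ Finset.range (m r), dep b (ψ ⟨r, i⟩) ≤ D b (m r) + m r := by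
      intro r hr
      calc ∑ i ∈ Finset.range (m r), dep b (ψ ⟨r, i⟩)
          ≤ ∑ i ∈ Finset.range (m r), (dep b i + 1) := by
            apply Finset.sum_le_sum
            intro i _
            have heq2 : ψ ⟨r, i⟩ = 1 + i * b + f r := by rw [hψ]; ring
            rw [heq2]
            exact dep_shift hb (hfb r hr)
        _ = D b (m r) + m r := by rw [Finset.sum_add_distrib]; simp [D]
    calc ∑ r ∈ F', ∑ i ∈ Finset.range (m r), dep b (ψ ⟨r, i⟩)
        ≤ ∑ r ∈ F', (D b (m r) + m r) := Finset.sum_le_sum hterm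
      _ = (∑ r ∈ F', D b (m r)) + ∑ r ∈ F', m r := Finset.sum_add_distrib
  have hzero : 0 ∉ T := by
    rw [hT]
    simp only [Finset.mem_image, not_exists]
    rintro x ⟨hx, hx0⟩
    simp only [hψ] at hx0
    omega
  rcases eq_or_lt_of_le hhigh with hN | hN
  · -- N = ∑ m
    calc D b N ≤ ∑ j ∈ T, dep b j := by
          apply sum_range_le_sum (dep_mono hb1)
          rw [hTcard, hsum_eq]
          omega
      _ ≤ (∑ r ∈ F', D b (m r)) + ∑ r ∈ F', m r := hTsum
      _ ≤ N + ∑ r ∈ F, D b (m r) := by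
          have h1 : ∑ r ∈ F', m r = N := by rw [hsum_eq]; exact hN
          omega
  · -- N = ∑ m + 1 : use the extra slot 0
    have hNeq : N = (∑ r ∈ F, m r) + 1 := by omega
    calc D b N ≤ ∑ j ∈ insert 0 T, dep b j := by
          apply sum_range_le_sum (dep_mono hb1)
          rw [Finset.card_insert_of_notMem hzero, hTcard, hsum_eq]
          omega
      _ = dep b 0 + ∑ j ∈ T, dep b j := Finset.sum_insert hzero
      _ ≤ N + ∑ r ∈ F, D b (m r) := by
          rw [dep_zero]
          have h1 : ∑ r ∈ F', m r = ∑ r ∈ F, m r := hsum_eq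
          omega

end GGaux

/-! ### Game-side auxiliary lemmas -/

namespace GuessingGame
open GGaux Finset

variable {α ρ : Type*} [DecidableEq α] [DecidableEq ρ] (gm : GuessingGame α ρ)

lemma split_subset (C : Finset α) (g : α) (r : ρ) : gm.split C g r ⊆ C :=
  Finset.filter_subset _ _

lemma sum_card_split {C : Finset α} (hCS : C ⊆ gm.S) {g : α} (hg : g ∈ gm.G) :
    ∑ r ∈ gm.R, (gm.split C g r).card = C.card := by
  simp only [split, Finset.card_filter]
  rw [Finset.sum_comm]
  have h1 : ∀ c ∈ C, (∑ r ∈ gm.R, if gm.ans g c = r then 1 else 0) = 1 := by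
    intro c hc
    rw [Finset.sum_ite_eq gm.R (gm.ans g c) (fun _ => 1),
      if_pos (gm.ans_mem g hg c (hCS hc))]
  rw [Finset.sum_congr rfl h1]
  simp

lemma card_split_rstar {C : Finset α} (hCS : C ⊆ gm.S) {g : α} (hg : g ∈ gm.G) :
    (gm.split C g gm.rstar).card = if g ∈ C then 1 else 0 := by
  have h1 : gm.split C g gm.rstar = C.filter (fun c => g = c) := by
    apply Finset.filter_congr
    intro c hc
    exact gm.ans_eq_rstar_iff g hg c (hCS hc)
  rw [h1, Finset.filter_eq]
  split <;> simp

lemma sum_card_split_erase {C : Finset α} (hCS : C ⊆ gm.S) {g : α} (hg : g ∈ gm.G) :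
    (∑ r ∈ gm.R.erase gm.rstar, (gm.split C g r).card) + (if g ∈ C then 1 else 0)
      = C.card := by
  rw [← gm.card_split_rstar hCS hg, Finset.sum_erase_add _ _ gm.rstar_mem,
    gm.sum_card_split hCS hg]

lemma nSplits_mono {C C' : Finset α} (h : C' ⊆ C) (g : α) :
    gm.nSplits g C' ≤ gm.nSplits g C := by
  apply Finset.card_le_card
  apply Finset.monotone_filter_right
  intro r _ hr
  obtain ⟨c, hc⟩ := hr
  exact ⟨c, Finset.mem_filter.2 ⟨h (Finset.mem_filter.1 hc).1, (Finset.mem_filter.1 hc).2⟩⟩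

lemma nSplits_le_MaxSplits {C : Finset α} {g : α} (hg : g ∈ gm.G) :
    gm.nSplits g C ≤ gm.MaxSplits C :=
  Finset.le_sup (f := fun g => gm.nSplits g C) hg

lemma MaxSplits_mono {C C' : Finset α} (h : C' ⊆ C) : gm.MaxSplits C' ≤ gm.MaxSplits C :=
  Finset.sup_mono_fun fun g _ => gm.nSplits_mono h g

lemma one_le_nSplits {C : Finset α} (hCS : C ⊆ gm.S) (hC : C.Nonempty) {g : α}
    (hg : g ∈ gm.G) : 1 ≤ gm.nSplits g C := by
  obtain ⟨c, hc⟩ := hC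
  apply Finset.card_pos.2
  exact ⟨gm.ans g c, Finset.mem_filter.2 ⟨gm.ans_mem g hg c (hCS hc),
    ⟨c, Finset.mem_filter.2 ⟨hc, rfl⟩⟩⟩⟩

lemma one_le_MaxSplits {C : Finset α} (hC : C.Nonempty) (hCS : C ⊆ gm.S) :
    1 ≤ gm.MaxSplits C := by
  obtain ⟨c, hc⟩ := hC
  have hcG : c ∈ gm.G := gm.S_subset_G (hCS hc)
  exact le_trans (gm.one_le_nSplits hCS ⟨c, hc⟩ hcG) (gm.nSplits_le_MaxSplits hcG)

lemma two_le_nSplits {C : Finset α} (hCS : C ⊆ gm.S) (h2 : 1 < C.card) {c : α}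
    (hc : c ∈ C) : 2 ≤ gm.nSplits c C := by
  have hcG : c ∈ gm.G := gm.S_subset_G (hCS hc)
  obtain ⟨c', hc', hne⟩ := Finset.exists_mem_ne h2 c
  have hc'S := hCS hc'
  have hr' : gm.ans c c' ∈ gm.R := gm.ans_mem c hcG c' hc'S
  have hrne : gm.ans c c' ≠ gm.rstar := fun h =>
    hne ((gm.ans_eq_rstar_iff c hcG c' hc'S).1 h).symm
  apply Finset.one_lt_card.2
  refine ⟨gm.rstar, ?_, gm.ans c c', ?_, fun h => hrne h.symm⟩
  · exact Finset.mem_filter.2 ⟨gm.rstar_mem, c,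
      Finset.mem_filter.2 ⟨hc, (gm.ans_eq_rstar_iff c hcG c (hCS hc)).2 rfl⟩⟩
  · exact Finset.mem_filter.2 ⟨hr', c', Finset.mem_filter.2 ⟨hc', rfl⟩⟩

lemma mem_UG_G {C : Finset α} (hCS : C ⊆ gm.S) {g : α} (hg : g ∈ gm.UG C) : g ∈ gm.G := by
  rw [UG] at hg
  split at hg
  · exact (Finset.mem_filter.1 hg).1
  · exact gm.S_subset_G (hCS hg)

lemma UG_nonempty {C : Finset α} (hCS : C ⊆ gm.S) (hC : C.Nonempty) :
    (gm.UG C).Nonempty := by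
  obtain ⟨c, hc⟩ := hC
  rw [UG]
  split
  · rename_i h
    exact ⟨c, Finset.mem_filter.2 ⟨gm.S_subset_G (hCS hc),
      by have := gm.two_le_nSplits hCS h hc; omega⟩⟩
  · exact ⟨c, hc⟩

lemma two_le_nSplits_of_mem_UG {C : Finset α} (hCS : C ⊆ gm.S) (h2 : 1 < C.card) {g : α}
    (hg : g ∈ gm.UG C) : 2 ≤ gm.nSplits g C := by
  rw [UG, if_pos h2] at hg
  obtain ⟨hgG, hne⟩ := Finset.mem_filter.1 hg
  have h1 : 1 ≤ gm.nSplits g C :=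
    gm.one_le_nSplits hCS (Finset.card_pos.1 (by omega)) hgG
  omega

lemma split_card_lt {C : Finset α} (hCS : C ⊆ gm.S) (hC : C.Nonempty) {g : α}
    (hg : g ∈ gm.UG C) {r : ρ} (hr : r ≠ gm.rstar) : (gm.split C g r).card < C.card := by
  rcases le_or_gt C.card 1 with h1 | h1
  · -- C = {g}
    have hg' : g ∈ C := by
      rw [UG, if_neg (by omega : ¬ 1 < C.card)] at hg
      exact hg
    have hgG : g ∈ gm.G := gm.S_subset_G (hCS hg')
    have hempty : gm.split C g r = ∅ := by
      rw [Finset.eq_empty_iff_forall_notMem]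
      intro x hx
      obtain ⟨hxC, hax⟩ := Finset.mem_filter.1 hx
      obtain ⟨c0, hc0⟩ := Finset.card_eq_one.1 (le_antisymm h1 hC.card_pos)
      have hxg : x = g := by
        rw [hc0, Finset.mem_singleton] at hxC hg'
        rw [hxC, hg']
      subst hxg
      apply hr
      rw [← hax]
      exact (gm.ans_eq_rstar_iff x hgG x (hCS hg')).2 rfl
    rw [hempty]
    simpa using hC.card_pos
  · have hn2 := gm.two_le_nSplits_of_mem_UG hCS h1 hg
    have hgG : g ∈ gm.G := gm.mem_UG_G hCS hg
    have hn2' : 1 < (gm.R.filter fun r => (gm.split C g r).Nonempty).card := by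
      have hdefn : gm.nSplits g C
          = (gm.R.filter fun r => (gm.split C g r).Nonempty).card := rfl
      omega
    obtain ⟨r1, hr1, r2, hr2, hr12⟩ := Finset.one_lt_card.1 hn2'
    have hne : gm.split C g r ≠ C := by
      intro hEq
      have hall : ∀ c ∈ C, gm.ans g c = r := by
        intro c hcm
        have : c ∈ gm.split C g r := hEq.symm ▸ hcm
        exact (Finset.mem_filter.1 this).2
      obtain ⟨hr1R, c1, hc1⟩ := Finset.mem_filter.1 hr1
      obtain ⟨hr2R, c2, hc2⟩ := Finset.mem_filter.1 hr2
      obtain ⟨hc1C, hc1a⟩ := Finset.mem_filter.1 hc1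
      obtain ⟨hc2C, hc2a⟩ := Finset.mem_filter.1 hc2
      apply hr12
      rw [← hc1a, ← hc2a, hall c1 hc1C, hall c2 hc2C]
    exact Finset.card_lt_card (Finset.ssubset_iff_subset_ne.2 ⟨gm.split_subset C g r, hne⟩)

lemma parts_card_le {C : Finset α} (hCS : C ⊆ gm.S) {g : α} (hgG : g ∈ gm.G) :
    ((gm.R.erase gm.rstar).filter fun r => 0 < (gm.split C g r).card).card
      + (if g ∈ C then 1 else 0) ≤ gm.nSplits g C := by
  have hpe : ((gm.R.erase gm.rstar).filter fun r => 0 < (gm.split C g r).card)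
      = ((gm.R.erase gm.rstar).filter fun r => (gm.split C g r).Nonempty) :=
    Finset.filter_congr fun r _ => Finset.card_pos
  rw [hpe, Finset.filter_erase]
  split
  · rename_i hgC
    have hst : gm.rstar ∈ gm.R.filter (fun r => (gm.split C g r).Nonempty) :=
      Finset.mem_filter.2 ⟨gm.rstar_mem, g,
        Finset.mem_filter.2 ⟨hgC, (gm.ans_eq_rstar_iff g hgG g (hCS hgC)).2 rfl⟩⟩
    rw [Finset.card_erase_of_mem hst]
    have h1 : 1 ≤ (gm.R.filter fun r => (gm.split C g r).Nonempty).card :=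
      Finset.card_pos.2 ⟨gm.rstar, hst⟩
    rw [nSplits]
    omega
  · rw [nSplits]
    have := Finset.card_le_card
      (Finset.erase_subset gm.rstar (gm.R.filter fun r => (gm.split C g r).Nonempty))
    omega

/-- The key per-guess inequality for the `Bound`-based lower bounds. -/
lemma Bound_le_V_aux {C : Finset α} (hCS : C ⊆ gm.S) (hC : C.Nonempty) {g : α}
    (hg : g ∈ gm.UG C) {b : ℕ} (hb1 : 1 ≤ b) (hbM : gm.MaxSplits C ≤ b) :
    Bound C.card b ≤ C.card + ∑ r ∈ gm.R.erase gm.rstar, Bound (gm.split C g r).card b := by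
  rcases le_or_gt C.card 1 with h1 | h1
  · have hc1 : C.card = 1 := le_antisymm h1 hC.card_pos
    rw [hc1, Bound_eq_D hb1, D_one]
    omega
  · have hgG : g ∈ gm.G := gm.mem_UG_G hCS hg
    have hb2 : 2 ≤ b :=
      le_trans (le_trans (gm.two_le_nSplits_of_mem_UG hCS h1 hg)
        (gm.nSplits_le_MaxSplits hgG)) hbM
    have hsum := gm.sum_card_split_erase hCS hgG
    have hparts0 := gm.parts_card_le hCS hgG
    have hnb : gm.nSplits g C ≤ b := le_trans (gm.nSplits_le_MaxSplits hgG) hbM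
    rw [Bound_eq_D hb1,
      Finset.sum_congr rfl (fun r _ => Bound_eq_D hb1 (gm.split C g r).card)]
    have hite : (if g ∈ C then 1 else 0) ≤ 1 := by split <;> omega
    obtain ⟨z, hz1, hz2, hz3⟩ : ∃ z, z ≤ 1 ∧
        (∑ r ∈ gm.R.erase gm.rstar, (gm.split C g r).card) + z = C.card ∧
        ((gm.R.erase gm.rstar).filter fun r => 0 < (gm.split C g r).card).card + z
          ≤ gm.nSplits g C :=
      ⟨_, hite, hsum, hparts0⟩
    exact key_lemma hb2 _ _ (by omega) _ (by omega) (by omega)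

/-! equations for `LB` and `MinTotalAux` -/

lemma LB_succ3 (n : ℕ) {C : Finset α} (h : ¬ C = ∅) :
    gm.LB (n+3) C = sInf (↑((gm.UG C).image fun g =>
      C.card + ∑ r ∈ gm.R.erase gm.rstar, gm.LB (n + 1) (gm.split C g r)) : Set ℕ) := by
  rw [LB, if_neg h]

lemma LB_one (C : Finset α) : gm.LB 1 C = Bound C.card (gm.MaxSplits gm.S) := by rw [LB]

lemma LB_two (C : Finset α) : gm.LB 2 C = Bound C.card (gm.MaxSplits C) := by rw [LB]

lemma LB_empty (n : ℕ) : gm.LB n ∅ = 0 := by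
  match n with
  | 0 => rw [LB]
  | 1 => rw [LB_one]; simp [Bound]
  | 2 => rw [LB_two]; simp [Bound]
  | (n+3) => rw [LB, if_pos rfl]

lemma le_LB3 {n : ℕ} {C : Finset α} (hC : C.Nonempty) (hCS : C ⊆ gm.S) (x : ℕ)
    (h : ∀ g ∈ gm.UG C,
      x ≤ C.card + ∑ r ∈ gm.R.erase gm.rstar, gm.LB (n+1) (gm.split C g r)) :
    x ≤ gm.LB (n+3) C := by
  rw [gm.LB_succ3 n (Finset.nonempty_iff_ne_empty.1 hC)]
  apply le_csInf
  · obtain ⟨g, hgU⟩ := gm.UG_nonempty hCS hC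
    exact ⟨_, Finset.mem_coe.2 (Finset.mem_image_of_mem _ hgU)⟩
  · rintro y hy
    rw [Finset.mem_coe, Finset.mem_image] at hy
    obtain ⟨g, hgU, rfl⟩ := hy
    exact h g hgU

lemma LB3_le {n : ℕ} {C : Finset α} (hC : ¬ C = ∅) {g : α} (hg : g ∈ gm.UG C) :
    gm.LB (n+3) C ≤ C.card + ∑ r ∈ gm.R.erase gm.rstar, gm.LB (n+1) (gm.split C g r) := by
  rw [gm.LB_succ3 n hC]
  exact Nat.sInf_le (Finset.mem_coe.2 (Finset.mem_image_of_mem _ hg))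

/-- Monotonicity of `LB` in the index. -/
lemma LB_mono_aux : ∀ (n : ℕ) (C : Finset α), C ⊆ gm.S → gm.LB (n+1) C ≤ gm.LB (n+3) C := by
  intro n
  induction n using Nat.strong_induction_on with
  | _ n ih =>
    match n, ih with
    | 0, _ =>
      intro C hCS
      rcases eq_or_ne C ∅ with rfl | hne
      · simp [LB_empty]
      · have hC : C.Nonempty := Finset.nonempty_iff_ne_empty.2 hne
        apply gm.le_LB3 hC hCS
        intro g hgU
        have hSne : gm.S.Nonempty := ⟨_, hCS hC.choose_spec⟩
        have hb1 : 1 ≤ gm.MaxSplits gm.S := gm.one_le_MaxSplits hSne (subset_refl _)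
        have hmain := gm.Bound_le_V_aux hCS hC hgU hb1 (gm.MaxSplits_mono hCS)
        rw [gm.LB_one,
          Finset.sum_congr rfl (fun r _ => gm.LB_one (gm.split C g r))]
        exact hmain
    | 1, _ =>
      intro C hCS
      rcases eq_or_ne C ∅ with rfl | hne
      · simp [LB_empty]
      · have hC : C.Nonempty := Finset.nonempty_iff_ne_empty.2 hne
        apply gm.le_LB3 hC hCS
        intro g hgU
        have hb1 : 1 ≤ gm.MaxSplits C := gm.one_le_MaxSplits hC hCS
        have hmain := gm.Bound_le_V_aux hCS hC hgU hb1 (le_refl _)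
        rw [gm.LB_two,
          Finset.sum_congr rfl (fun r _ => gm.LB_two (gm.split C g r))]
        refine le_trans hmain (Nat.add_le_add_left (Finset.sum_le_sum ?_) _)
        intro r _
        rcases eq_or_ne (gm.split C g r) ∅ with hsp | hsp
        · rw [hsp]
          simp [Bound]
        · have hspne : (gm.split C g r).Nonempty := Finset.nonempty_iff_ne_empty.2 hsp
          have hsub : gm.split C g r ⊆ gm.S := subset_trans (gm.split_subset C g r) hCS
          exact Bound_anti (gm.one_le_MaxSplits hspne hsub)
            (gm.MaxSplits_mono (gm.split_subset C g r)) _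
    | (k+2), ih =>
      intro C hCS
      rcases eq_or_ne C ∅ with rfl | hne
      · simp [LB_empty]
      · have hC : C.Nonempty := Finset.nonempty_iff_ne_empty.2 hne
        apply gm.le_LB3 hC hCS
        intro g hgU
        calc gm.LB (k+2+1) C
            ≤ C.card + ∑ r ∈ gm.R.erase gm.rstar, gm.LB (k+1) (gm.split C g r) :=
              gm.LB3_le hne hgU
          _ ≤ C.card + ∑ r ∈ gm.R.erase gm.rstar, gm.LB (k+2+1) (gm.split C g r) := by
              apply Nat.add_le_add_left
              apply Finset.sum_le_sum
              intro r _
              exact ih k (by omega) _ (subset_trans (gm.split_subset C g r) hCS)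

/-! MinTotal facts -/

lemma MinTotalAux_empty : ∀ f : ℕ, gm.MinTotalAux f ∅ = 0
  | 0 => by rw [MinTotalAux]
  | (f+1) => by rw [MinTotalAux, if_pos rfl]

lemma MinTotalAux_succ (f : ℕ) {C : Finset α} (h : ¬ C = ∅) :
    gm.MinTotalAux (f+1) C = sInf (↑((gm.UG C).image fun g =>
      C.card + ∑ r ∈ gm.R.erase gm.rstar, gm.MinTotalAux f (gm.split C g r)) : Set ℕ) := by
  rw [MinTotalAux, if_neg h]

lemma MinTotalAux_congr : ∀ (n : ℕ) (C : Finset α), C.card = n → C ⊆ gm.S →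
    ∀ f1 f2 : ℕ, n ≤ f1 → n ≤ f2 → gm.MinTotalAux f1 C = gm.MinTotalAux f2 C := by
  intro n
  induction n using Nat.strong_induction_on with
  | _ n ih =>
    intro C hcard hCS f1 f2 h1 h2
    rcases eq_or_ne C ∅ with rfl | hne
    · rw [MinTotalAux_empty, MinTotalAux_empty]
    · have hC : C.Nonempty := Finset.nonempty_iff_ne_empty.2 hne
      have hn : 1 ≤ n := hcard ▸ hC.card_pos
      obtain ⟨a, rfl⟩ : ∃ a, f1 = a + 1 := ⟨f1 - 1, by omega⟩
      obtain ⟨c, rfl⟩ : ∃ c, f2 = c + 1 := ⟨f2 - 1, by omega⟩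
      rw [gm.MinTotalAux_succ a hne, gm.MinTotalAux_succ c hne]
      have himg : ((gm.UG C).image fun g =>
            C.card + ∑ r ∈ gm.R.erase gm.rstar, gm.MinTotalAux a (gm.split C g r))
          = ((gm.UG C).image fun g =>
            C.card + ∑ r ∈ gm.R.erase gm.rstar, gm.MinTotalAux c (gm.split C g r)) := by
        apply Finset.image_congr
        intro g hgU
        refine congrArg (fun z => C.card + z) (Finset.sum_congr rfl fun r hr => ?_)
        have hlt : (gm.split C g r).card < n :=
          hcard ▸ gm.split_card_lt hCS hC hgU (Finset.mem_erase.1 hr).1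
        exact ih _ hlt _ rfl (subset_trans (gm.split_subset C g r) hCS) a c
          (by omega) (by omega)
      rw [himg]

lemma MinTotal_empty : gm.MinTotal ∅ = 0 := by
  rw [MinTotal]
  exact gm.MinTotalAux_empty _

lemma MinTotal_eq {C : Finset α} (hCS : C ⊆ gm.S) (hne : ¬ C = ∅) :
    gm.MinTotal C = sInf (↑((gm.UG C).image fun g =>
      C.card + ∑ r ∈ gm.R.erase gm.rstar, gm.MinTotal (gm.split C g r)) : Set ℕ) := by
  have hC : C.Nonempty := Finset.nonempty_iff_ne_empty.2 hne
  obtain ⟨m, hm⟩ : ∃ m, C.card = m + 1 := ⟨C.card - 1, by have := hC.card_pos; omega⟩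
  conv_lhs => rw [MinTotal, hm]
  rw [gm.MinTotalAux_succ m hne]
  have himg : ((gm.UG C).image fun g =>
        C.card + ∑ r ∈ gm.R.erase gm.rstar, gm.MinTotalAux m (gm.split C g r))
      = ((gm.UG C).image fun g =>
        C.card + ∑ r ∈ gm.R.erase gm.rstar, gm.MinTotal (gm.split C g r)) := by
    apply Finset.image_congr
    intro g hgU
    refine congrArg (fun z => C.card + z) (Finset.sum_congr rfl fun r hr => ?_)
    have hlt : (gm.split C g r).card < C.card :=
      gm.split_card_lt hCS hC hgU (Finset.mem_erase.1 hr).1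
    rw [MinTotal]
    exact gm.MinTotalAux_congr _ _ rfl (subset_trans (gm.split_subset C g r) hCS) m _
      (by omega) le_rfl
  rw [himg]

lemma LB_eq_MinTotal : ∀ (n : ℕ) (C : Finset α), C.card = n → C ⊆ gm.S →
    ∀ k : ℕ, 2 * n + 1 ≤ k → gm.LB k C = gm.MinTotal C := by
  intro n
  induction n using Nat.strong_induction_on with
  | _ n ih =>
    intro C hcard hCS k hk
    rcases eq_or_ne C ∅ with rfl | hne
    · rw [MinTotal_empty, LB_empty]
    · have hC : C.Nonempty := Finset.nonempty_iff_ne_empty.2 hne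
      have hn : 1 ≤ n := hcard ▸ hC.card_pos
      obtain ⟨m, rfl⟩ : ∃ m, k = m + 3 := ⟨k - 3, by omega⟩
      rw [gm.LB_succ3 m hne, gm.MinTotal_eq hCS hne]
      have himg : ((gm.UG C).image fun g =>
            C.card + ∑ r ∈ gm.R.erase gm.rstar, gm.LB (m + 1) (gm.split C g r))
          = ((gm.UG C).image fun g =>
            C.card + ∑ r ∈ gm.R.erase gm.rstar, gm.MinTotal (gm.split C g r)) := by
        apply Finset.image_congr
        intro g hgU
        refine congrArg (fun z => C.card + z) (Finset.sum_congr rfl fun r hr => ?_)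
        have hlt : (gm.split C g r).card < n :=
          hcard ▸ gm.split_card_lt hCS hC hgU (Finset.mem_erase.1 hr).1
        exact ih _ hlt _ rfl (subset_trans (gm.split_subset C g r) hCS) (m+1) (by omega)
      rw [himg]

lemma LB_le_MinTotal {n : ℕ} (hn : 1 ≤ n) {C : Finset α} (hCS : C ⊆ gm.S) :
    gm.LB n C ≤ gm.MinTotal C := by
  have step : ∀ t : ℕ, gm.LB n C ≤ gm.LB (n + 2*t) C := by
    intro t
    induction t with
    | zero => simp
    | succ t iht =>
      refine le_trans iht ?_
      obtain ⟨a, ha⟩ : ∃ a, n + 2*t = a + 1 := ⟨n + 2*t - 1, by omega⟩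
      have h2 : n + 2*(t+1) = a + 3 := by omega
      rw [ha, h2]
      exact gm.LB_mono_aux a C hCS
  refine le_trans (step (C.card + 1)) ?_
  rw [gm.LB_eq_MinTotal C.card C rfl hCS _ (by omega)]

end GuessingGame

section Statements

open GuessingGame

variable {α ρ : Type*} [DecidableEq α] [DecidableEq ρ]

theorem statement_17 (gm : GuessingGame α ρ) (n : ℕ) (hn : 1 ≤ n)
    (g : α) (hg : g ∈ gm.G) (C : Finset α) (hCS : C ⊆ gm.S) :
    gm.V n g C ≤ gm.V (n + 2) g C ∧ gm.V (n + 2) g C ≤ gm.Vstar g C := by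
  obtain ⟨m, rfl⟩ : ∃ m, n = m + 1 := ⟨n - 1, by omega⟩
  constructor
  · show gm.V (m+1) g C ≤ gm.V (m+1+2) g C
    rw [V, V]
    apply Nat.add_le_add_left
    apply Finset.sum_le_sum
    intro r _
    have h1 := gm.LB_mono_aux m (gm.split C g r)
      (subset_trans (gm.split_subset C g r) hCS)
    have h2 : m + 1 + 2 = m + 3 := by omega
    rw [h2]
    exact h1
  · rw [V, Vstar]
    apply Nat.add_le_add_left
    apply Finset.sum_le_sum
    intro r _
    exact gm.LB_le_MinTotal (by omega) (subset_trans (gm.split_subset C g r) hCS)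

end Statements
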